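/- Let ε > 0, Ω_ε = ℝ^{d-1} × (0,ε), and let α : ℝ^{d-1} → ℝ be bounded measurable. Define the sesquilinear form h_ε(u,v) := ∫_{Ω_ε} ∇u·∇v̄ dx + i∫_{ℝ^{d-1}} α(x')(u v̄)(x',ε) dx' − i∫_{ℝ^{d-1}} α(x')(u v̄)(x',0) dx' on W^{1,2}(Ω_ε), with boundary values in the trace sense. Then for every u ∈ W^{1,2}(Ω_ε), the quadratic form satisfies Re h_ε[u] = ‖∇u‖²_{L²(Ω_ε)} ≥ 0 and |Im h_ε[u]| ≤ 2‖α‖_∞ ‖u‖_{L²(Ω_ε)} ‖∇u‖_{L²(Ω_ε)}. -/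

import Mathlib

open MeasureTheory Set Complex

lemma slice_bound (ε : ℝ) (hε : 0 < ε) (z w : ℝ → ℂ)
    (hd : ∀ t, HasDerivAt z (w t) t)
    (hint : IntegrableOn (fun t => ‖z t‖ * ‖w t‖) (Ioo 0 ε)) :
    |‖z ε‖^2 - ‖z 0‖^2| ≤ 2 * ∫ t in Ioo 0 ε, ‖z t‖ * ‖w t‖ := by
  have hIooIoc : (volume : Measure ℝ).restrict (Ioo 0 ε) = volume.restrict (Ioc 0 ε) :=
    Measure.restrict_congr_set Ioo_ae_eq_Ioc
  have hintc : IntegrableOn (fun t => ‖z t‖ * ‖w t‖) (Ioc 0 ε) := by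
    rwa [IntegrableOn, ← hIooIoc]
  set φ' : ℝ → ℝ := fun t => 2 * (inner ℝ (z t) (w t) : ℝ) with hφ'
  have hzc : Continuous z := by
    rw [continuous_iff_continuousAt]; exact fun t => (hd t).continuousAt
  have hwm : Measurable w := by
    have : w = deriv z := funext fun t => ((hd t).deriv).symm
    rw [this]; exact measurable_deriv _
  have hm : Measurable φ' :=
    measurable_const.mul (Measurable.inner (𝕜 := ℝ) hzc.measurable hwm)
  have hbound : ∀ t, |φ' t| ≤ 2 * (‖z t‖ * ‖w t‖) := fun t => by
    have h := abs_real_inner_le_norm (z t) (w t)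
    calc |φ' t| = 2 * |(inner ℝ (z t) (w t) : ℝ)| := by rw [hφ', abs_mul]; norm_num
      _ ≤ 2 * (‖z t‖ * ‖w t‖) := by nlinarith
  have hφ'int : IntegrableOn φ' (Ioc 0 ε) :=
    Integrable.mono' (hintc.const_mul 2) hm.aestronglyMeasurable
      (ae_of_all _ fun t => by simpa [Real.norm_eq_abs] using hbound t)
  have hFTC : ∫ t in (0:ℝ)..ε, φ' t = ‖z ε‖^2 - ‖z 0‖^2 := by
    apply intervalIntegral.integral_eq_sub_of_hasDerivAt (fun t _ => (hd t).norm_sq)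
    rw [intervalIntegrable_iff, uIoc_of_le hε.le]; exact hφ'int
  have hII : IntervalIntegrable φ' volume 0 ε := by
    rw [intervalIntegrable_iff, uIoc_of_le hε.le]; exact hφ'int
  have hII2 : IntervalIntegrable (fun t => 2 * (‖z t‖ * ‖w t‖)) volume 0 ε := by
    rw [intervalIntegrable_iff, uIoc_of_le hε.le]; exact hintc.const_mul 2
  calc |‖z ε‖^2 - ‖z 0‖^2| = |∫ t in (0:ℝ)..ε, φ' t| := by rw [hFTC]
    _ ≤ ∫ t in (0:ℝ)..ε, |φ' t| := intervalIntegral.abs_integral_le_integral_abs hε.le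
    _ ≤ ∫ t in (0:ℝ)..ε, 2 * (‖z t‖ * ‖w t‖) :=
        intervalIntegral.integral_mono_on hε.le hII.abs hII2 (fun t _ => hbound t)
    _ = 2 * ∫ t in Ioo 0 ε, ‖z t‖ * ‖w t‖ := by
        rw [intervalIntegral.integral_of_le hε.le, ← hIooIoc, integral_const_mul]

lemma half_half : (1 : ENNReal) / 1 = 1 / 2 + 1 / 2 := by
  rw [ENNReal.div_eq_inv_mul]; norm_num
  rw [← two_mul, ENNReal.mul_inv_cancel] <;> norm_num

lemma memℒp_mul_norm {α : Type*} [MeasurableSpace α] {μ : Measure α}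
    {F G : Type*} [NormedAddCommGroup F] [NormedAddCommGroup G] {u : α → F} {ud : α → G}
    (hu : MemLp u 2 μ) (hud : MemLp ud 2 μ) :
    Integrable (fun x => ‖u x‖ * ‖ud x‖) μ :=
  memLp_one_iff_integrable.mp (hud.norm.smul hu.norm)

/-- The quadratic form `h_ε[u] = ∫_{Ω_ε} |∇u|² + i∫ α |u(·,ε)|² - i∫ α |u(·,0)|²`,
where `g'` is the gradient of `u` in the first `d-1` variables and `ud = ∂_d u`. -/
noncomputable def robinForm (n : ℕ) (ε : ℝ) (α : EuclideanSpace ℝ (Fin n) → ℝ)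
    (u : EuclideanSpace ℝ (Fin n) × ℝ → ℂ)
    (g' : EuclideanSpace ℝ (Fin n) × ℝ → EuclideanSpace ℂ (Fin n))
    (ud : EuclideanSpace ℝ (Fin n) × ℝ → ℂ) : ℂ :=
  ((∫ x, (‖g' x‖ ^ 2 + ‖ud x‖ ^ 2)
      ∂((volume : Measure (EuclideanSpace ℝ (Fin n) × ℝ)).restrict (univ ×ˢ Ioo 0 ε)) : ℝ) : ℂ)
  + Complex.I * ((∫ x', α x' * ‖u (x', ε)‖ ^ 2 : ℝ) : ℂ)
  - Complex.I * ((∫ x', α x' * ‖u (x', 0)‖ ^ 2 : ℝ) : ℂ)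

/-- Sectoriality of the Robin form: `Re h_ε[u] = ‖∇u‖² ≥ 0` and
`|Im h_ε[u]| ≤ 2 ‖α‖_∞ ‖u‖ ‖∇u‖` for `u ∈ W^{1,2}(Ω_ε)`. -/
theorem stmt_8 (n : ℕ) (ε : ℝ) (hε : 0 < ε)
    (α : EuclideanSpace ℝ (Fin n) → ℝ) (Mα : ℝ)
    (hαm : Measurable α) (hMα : ∀ x', |α x'| ≤ Mα)
    (u : EuclideanSpace ℝ (Fin n) × ℝ → ℂ)
    (g' : EuclideanSpace ℝ (Fin n) × ℝ → EuclideanSpace ℂ (Fin n))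
    (ud : EuclideanSpace ℝ (Fin n) × ℝ → ℂ)
    (hderiv : ∀ (x' : EuclideanSpace ℝ (Fin n)) (t : ℝ),
      HasDerivAt (fun s => u (x', s)) (ud (x', t)) t)
    (hu : MemLp u 2 ((volume : Measure (EuclideanSpace ℝ (Fin n) × ℝ)).restrict
      (univ ×ˢ Ioo 0 ε)))
    (hg' : MemLp g' 2 ((volume : Measure (EuclideanSpace ℝ (Fin n) × ℝ)).restrict
      (univ ×ˢ Ioo 0 ε)))
    (hud : MemLp ud 2 ((volume : Measure (EuclideanSpace ℝ (Fin n) × ℝ)).restrict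
      (univ ×ˢ Ioo 0 ε)))
    (htr0 : MemLp (fun x' => u (x', 0)) 2 (volume : Measure (EuclideanSpace ℝ (Fin n))))
    (htrε : MemLp (fun x' => u (x', ε)) 2 (volume : Measure (EuclideanSpace ℝ (Fin n)))) :
    (robinForm n ε α u g' ud).re
      = ∫ x, (‖g' x‖ ^ 2 + ‖ud x‖ ^ 2)
          ∂((volume : Measure (EuclideanSpace ℝ (Fin n) × ℝ)).restrict (univ ×ˢ Ioo 0 ε)) ∧
    0 ≤ (robinForm n ε α u g' ud).re ∧
    |(robinForm n ε α u g' ud).im|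
      ≤ 2 * Mα * Real.sqrt (∫ x, ‖u x‖ ^ 2
            ∂((volume : Measure (EuclideanSpace ℝ (Fin n) × ℝ)).restrict (univ ×ˢ Ioo 0 ε)))
          * Real.sqrt (∫ x, (‖g' x‖ ^ 2 + ‖ud x‖ ^ 2)
            ∂((volume : Measure (EuclideanSpace ℝ (Fin n) × ℝ)).restrict (univ ×ˢ Ioo 0 ε))) := by
  set μ : Measure (EuclideanSpace ℝ (Fin n) × ℝ) := (volume : Measure (EuclideanSpace ℝ (Fin n) × ℝ)).restrict (univ ×ˢ Ioo 0 ε) with hμdef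
  set ν : Measure ℝ := (volume : Measure ℝ).restrict (Ioo 0 ε) with hνdef
  have hμ : μ = (volume : Measure (EuclideanSpace ℝ (Fin n))).prod ν := by
    rw [hμdef, hνdef, Measure.volume_eq_prod, ← Measure.prod_restrict, Measure.restrict_univ]
  set D : ℝ := ∫ x, (‖g' x‖ ^ 2 + ‖ud x‖ ^ 2) ∂μ with hDdef
  set N : ℝ := ∫ x, ‖u x‖ ^ 2 ∂μ with hNdef
  have hre : (robinForm n ε α u g' ud).re = D := by
    unfold robinForm
    simp only [Complex.sub_re, Complex.add_re, Complex.mul_re, Complex.I_re, Complex.I_im,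
      Complex.ofReal_re, Complex.ofReal_im, ← hμdef, ← hDdef]
    ring
  have him : (robinForm n ε α u g' ud).im
      = (∫ x', α x' * ‖u (x', ε)‖ ^ 2) - (∫ x', α x' * ‖u (x', 0)‖ ^ 2) := by
    unfold robinForm
    simp only [Complex.sub_im, Complex.add_im, Complex.mul_im, Complex.I_re, Complex.I_im,
      Complex.ofReal_re, Complex.ofReal_im]
    ring
  have hD0 : 0 ≤ D := integral_nonneg fun x => by positivity
  have hN0 : 0 ≤ N := integral_nonneg fun x => by positivity
  have hMα0 : 0 ≤ Mα := le_trans (abs_nonneg _) (hMα 0)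
  refine ⟨hre, by rw [hre]; exact hD0, ?_⟩
  -- integrable product on the slab
  have hw : Integrable (fun x : EuclideanSpace ℝ (Fin n) × ℝ => ‖u x‖ * ‖ud x‖) ((volume : Measure (EuclideanSpace ℝ (Fin n))).prod ν) := by
    rw [← hμ]; exact memℒp_mul_norm hu hud
  have hsl : ∀ᵐ x' ∂(volume : Measure (EuclideanSpace ℝ (Fin n))),
      IntegrableOn (fun t => ‖u (x', t)‖ * ‖ud (x', t)‖) (Ioo 0 ε) := hw.prod_right_ae
  set g : EuclideanSpace ℝ (Fin n) → ℝ := fun x' => ∫ t, ‖u (x', t)‖ * ‖ud (x', t)‖ ∂ν with hgdef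
  have hgint : Integrable g volume := hw.integral_prod_left
  have hfub : ∫ x', g x' = ∫ z, ‖u z‖ * ‖ud z‖ ∂((volume : Measure (EuclideanSpace ℝ (Fin n))).prod ν) :=
    integral_integral hw
  have hdbd : ∀ᵐ x' ∂(volume : Measure (EuclideanSpace ℝ (Fin n))),
      |‖u (x', ε)‖ ^ 2 - ‖u (x', 0)‖ ^ 2| ≤ 2 * g x' := by
    filter_upwards [hsl] with x' hx'
    exact slice_bound ε hε (fun s => u (x', s)) (fun s => ud (x', s)) (hderiv x') hx'
  -- integrability of the boundary terms
  have hbε : Integrable (fun x' => α x' * ‖u (x', ε)‖ ^ 2) (volume : Measure (EuclideanSpace ℝ (Fin n))) := by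
    have h2 : Integrable (fun x' => ‖u (x', ε)‖ * ‖u (x', ε)‖) volume :=
      memℒp_mul_norm htrε htrε
    have h2' : Integrable (fun x' => ‖u (x', ε)‖ ^ 2) (volume : Measure (EuclideanSpace ℝ (Fin n))) := by
      simpa [pow_two] using h2
    exact h2'.bdd_mul (c := Mα) hαm.aestronglyMeasurable (ae_of_all _ fun x' => by
      simpa [Real.norm_eq_abs] using hMα x')
  have hb0 : Integrable (fun x' => α x' * ‖u (x', 0)‖ ^ 2) (volume : Measure (EuclideanSpace ℝ (Fin n))) := by
    have h2 : Integrable (fun x' => ‖u (x', 0)‖ * ‖u (x', 0)‖) volume :=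
      memℒp_mul_norm htr0 htr0
    have h2' : Integrable (fun x' => ‖u (x', 0)‖ ^ 2) (volume : Measure (EuclideanSpace ℝ (Fin n))) := by
      simpa [pow_two] using h2
    exact h2'.bdd_mul (c := Mα) hαm.aestronglyMeasurable (ae_of_all _ fun x' => by
      simpa [Real.norm_eq_abs] using hMα x')
  have him_eq : (∫ x', α x' * ‖u (x', ε)‖ ^ 2) - (∫ x', α x' * ‖u (x', 0)‖ ^ 2)
      = ∫ x', α x' * (‖u (x', ε)‖ ^ 2 - ‖u (x', 0)‖ ^ 2) := by
    rw [← integral_sub hbε hb0]; congr 1; funext x'; ring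
  have key : |(∫ x', α x' * ‖u (x', ε)‖ ^ 2) - (∫ x', α x' * ‖u (x', 0)‖ ^ 2)|
      ≤ ∫ x', Mα * (2 * g x') := by
    rw [him_eq, ← Real.norm_eq_abs]
    refine norm_integral_le_of_norm_le ((hgint.const_mul 2).const_mul Mα) ?_
    filter_upwards [hdbd] with x' h
    rw [Real.norm_eq_abs, abs_mul]
    exact mul_le_mul (hMα x') h (abs_nonneg _) hMα0
  -- Cauchy–Schwarz
  have h22 : (2 : ℝ).HolderConjugate 2 := Real.HolderConjugate.two_two
  have hof : (ENNReal.ofReal 2) = 2 := by norm_num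
  have hCS : ∫ z, ‖u z‖ * ‖ud z‖ ∂μ ≤ Real.sqrt N * Real.sqrt (∫ x, ‖ud x‖ ^ 2 ∂μ) := by
    have := integral_mul_le_Lp_mul_Lq_of_nonneg h22
      (ae_of_all _ fun x => norm_nonneg (u x)) (ae_of_all _ fun x => norm_nonneg (ud x))
      (by rw [hof]; exact hu.norm) (by rw [hof]; exact hud.norm)
    have hr2 : ∀ x : ℝ, x ^ (2 : ℝ) = x ^ 2 := fun x => by
      rw [show (2 : ℝ) = ((2 : ℕ) : ℝ) by norm_num, Real.rpow_natCast]
    simp only [hr2, ← Real.sqrt_eq_rpow] at this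
    exact this
  -- bound ∫‖ud‖² by D
  have hudsq : Integrable (fun x => ‖ud x‖ ^ 2) μ := by
    simpa [pow_two] using memℒp_mul_norm hud hud
  have hg'sq : Integrable (fun x => ‖g' x‖ ^ 2) μ := by
    simpa [pow_two] using memℒp_mul_norm hg' hg'
  have hud_le : ∫ x, ‖ud x‖ ^ 2 ∂μ ≤ D := by
    rw [hDdef]
    exact integral_mono hudsq (hg'sq.add hudsq) fun x => le_add_of_nonneg_left (by positivity)
  have hsqrt : Real.sqrt (∫ x, ‖ud x‖ ^ 2 ∂μ) ≤ Real.sqrt D := Real.sqrt_le_sqrt hud_le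
  rw [him]
  calc |(∫ x', α x' * ‖u (x', ε)‖ ^ 2) - ∫ x', α x' * ‖u (x', 0)‖ ^ 2|
      ≤ ∫ x', Mα * (2 * g x') := key
    _ = 2 * Mα * ∫ x', g x' := by
        rw [integral_const_mul, integral_const_mul]; ring
    _ = 2 * Mα * ∫ z, ‖u z‖ * ‖ud z‖ ∂μ := by rw [hfub, hμ]
    _ ≤ 2 * Mα * (Real.sqrt N * Real.sqrt (∫ x, ‖ud x‖ ^ 2 ∂μ)) := by
        apply mul_le_mul_of_nonneg_left hCS (by positivity)
    _ ≤ 2 * Mα * (Real.sqrt N * Real.sqrt D) := by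
        apply mul_le_mul_of_nonneg_left
          (mul_le_mul_of_nonneg_left hsqrt (Real.sqrt_nonneg _)) (by positivity)
    _ = 2 * Mα * Real.sqrt N * Real.sqrt D := by ring
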